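/- Let β > 1 and let F_β be the class of functions on [0,1) defined from the Haar-type system as in the context. Then there is a constant c > 0, depending only on β, such that g_n(F_β) ≥ c · n^{−1/2} · (log n)^{−β+1} for all n ≥ 2, where the sampling numbers are taken in L₂([0,1)) with Lebesgue measure. -/

import Mathlib

/-!
Statement 15 (Example): For `β > 1`, the class `F_β` built from the dyadic indicator
system on `[0,1)` with level-wise coefficient constraint
`∑_{k=1}^{2^ℓ} |c_{ℓ,k}|² ≤ (ℓ+1)^{−2β}` satisfies
`g_n(F_β) ≥ c n^{−1/2} (log n)^{−β+1}` for all `n ≥ 2`, for a constant `c = c(β) > 0`,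
where the sampling numbers are taken in `L₂([0,1))` with Lebesgue measure.
-/

open MeasureTheory ENNReal

noncomputable section

/-- The unit interval `[0,1)` as a subtype of `ℝ`. -/
abbrev UnitIco : Type := Set.Ico (0 : ℝ) 1

/-- Lebesgue measure on `[0,1)`. -/
def μ01 : Measure UnitIco := MeasureTheory.Measure.comap Subtype.val volume

/-- Sampling numbers in `L₂(μ)`. -/
def sampNum {D : Type*} [MeasurableSpace D] (μ : Measure D)
    (F : Set (D → ℂ)) (n : ℕ) : ℝ≥0∞ :=
  ⨅ (x : Fin n → D) (φ : Fin n → D → ℂ) (_ : ∀ i, MemLp (φ i) 2 μ),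
    ⨆ f ∈ F, eLpNorm (fun t => f t - ∑ i, f (x i) * φ i t) 2 μ

/-- `χ ℓ k` is the indicator function of the dyadic interval
`I_{ℓ,k} = [(k−1) 2^{−ℓ}, k 2^{−ℓ}) ⊂ [0,1)`. -/
def dyadicChi (ℓ k : ℕ) : UnitIco → ℂ := fun x =>
  if ((k : ℝ) - 1) / 2 ^ ℓ ≤ (x : ℝ) ∧ (x : ℝ) < (k : ℝ) / 2 ^ ℓ then 1 else 0

/-- The class `F_β`: all functions `f_c = ∑_{ℓ,k} c_{ℓ,k} χ_{ℓ,k}` with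
`∑_{k=1}^{2^ℓ} |c_{ℓ,k}|² ≤ (ℓ+1)^{−2β}` for all `ℓ ∈ ℕ₀`. -/
def Fβ (β : ℝ) : Set (UnitIco → ℂ) :=
  { f | ∃ c : ℕ → ℕ → ℂ,
      (∀ ℓ : ℕ, ∑ k ∈ Finset.Icc 1 (2 ^ ℓ), ‖c ℓ k‖ ^ 2 ≤ ((ℓ : ℝ) + 1) ^ (-(2 * β))) ∧
      f = fun x => ∑' ℓ : ℕ, ∑ k ∈ Finset.Icc 1 (2 ^ ℓ), c ℓ k * dyadicChi ℓ k x }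

namespace St15

/-- index of the dyadic interval of level ℓ containing t (0-based) -/
def kf (ℓ : ℕ) (t : UnitIco) : ℕ := ⌊(t : ℝ) * 2 ^ ℓ⌋₊

lemma kf_lt (ℓ : ℕ) (t : UnitIco) : kf ℓ t < 2 ^ ℓ := by
  have h0 : (0:ℝ) ≤ (t:ℝ) := t.2.1
  have h1 : (t:ℝ) < 1 := t.2.2
  have hp : (0:ℝ) < 2 ^ ℓ := by positivity
  rw [kf, Nat.floor_lt (by positivity)]
  push_cast
  nlinarith

lemma chi_self (ℓ : ℕ) (t : UnitIco) : dyadicChi ℓ (kf ℓ t + 1) t = 1 := by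
  have h0 : (0:ℝ) ≤ (t:ℝ) := t.2.1
  have hp : (0:ℝ) < 2 ^ ℓ := by positivity
  have hl : (kf ℓ t : ℝ) ≤ (t:ℝ) * 2 ^ ℓ := Nat.floor_le (by positivity)
  have hu : (t:ℝ) * 2 ^ ℓ < kf ℓ t + 1 := Nat.lt_floor_add_one _
  rw [dyadicChi, if_pos]
  constructor
  · rw [div_le_iff₀ hp]; push_cast; linarith
  · rw [lt_div_iff₀ hp]; push_cast; linarith

lemma chi_ne (ℓ k : ℕ) (t : UnitIco) (hk : k ≠ kf ℓ t + 1) : dyadicChi ℓ k t = 0 := by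
  have h0 : (0:ℝ) ≤ (t:ℝ) := t.2.1
  have hp : (0:ℝ) < 2 ^ ℓ := by positivity
  rw [dyadicChi, if_neg]
  rintro ⟨hle, hlt⟩
  rw [div_le_iff₀ hp] at hle
  rw [lt_div_iff₀ hp] at hlt
  rcases Nat.eq_zero_or_pos k with rfl | hk1
  · simp at hlt; nlinarith
  · apply hk
    have : kf ℓ t = k - 1 := by
      rw [kf, Nat.floor_eq_iff (by positivity)]
      constructor
      · push_cast [Nat.cast_sub hk1]; linarith
      · push_cast [Nat.cast_sub hk1]; linarith
    omega

/-- same level-ℓ interval (ℓ ≥ L) implies same level-L interval -/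
lemma kf_level_le {L ℓ : ℕ} (h : L ≤ ℓ) (t : UnitIco) : kf L t = kf ℓ t / 2 ^ (ℓ - L) := by
  rw [kf, kf, ← Nat.floor_div_natCast]
  congr 1
  have h2 : ((2:ℝ) ^ (ℓ - L)) ≠ 0 := by positivity
  push_cast
  rw [eq_div_iff h2, mul_assoc, ← pow_add]
  congr 2
  omega

variable (β : ℝ) (n : ℕ) (x : Fin n → UnitIco)

/-- level parameter: 2^(Lv n) ≥ 2n -/
def Lv : ℕ := Nat.clog 2 (2 * n)

/-- coefficient magnitude at level ℓ -/
def aa (ℓ : ℕ) : ℝ := ((ℓ : ℝ) + 1) ^ (-β) * (n : ℝ) ^ (-(1/2) : ℝ)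

/-- the constant value -/
def vv : ℝ := ∑ ℓ ∈ Finset.Ico (Lv n) (2 * Lv n), aa β n ℓ

/-- the coefficient family of the fooling function -/
def cc (ℓ k : ℕ) : ℂ :=
  if ℓ = 0 ∧ k = 1 then ((vv β n : ℝ) : ℂ)
  else if (Lv n ≤ ℓ ∧ ℓ < 2 * Lv n) ∧ ∃ i, kf ℓ (x i) + 1 = k then ((-(aa β n ℓ) : ℝ) : ℂ)
  else 0

/-- the fooling function -/
def ff : UnitIco → ℂ := fun t =>
  ∑' ℓ : ℕ, ∑ k ∈ Finset.Icc 1 (2 ^ ℓ), cc β n x ℓ k * dyadicChi ℓ k t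

lemma aa_nonneg (ℓ : ℕ) : 0 ≤ aa β n ℓ := by
  rw [aa]; positivity

lemma vv_nonneg : 0 ≤ vv β n := Finset.sum_nonneg fun ℓ _ => aa_nonneg β n ℓ

lemma inner_sum (ℓ : ℕ) (t : UnitIco) :
    ∑ k ∈ Finset.Icc 1 (2 ^ ℓ), cc β n x ℓ k * dyadicChi ℓ k t = cc β n x ℓ (kf ℓ t + 1) := by
  rw [Finset.sum_eq_single (kf ℓ t + 1)]
  · rw [chi_self, mul_one]
  · intro k _ hk
    rw [chi_ne ℓ k t hk, mul_zero]
  · intro h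
    exfalso
    apply h
    rw [Finset.mem_Icc]
    exact ⟨Nat.le_add_left 1 _, kf_lt ℓ t⟩

lemma Lv_ge_two (hn : 2 ≤ n) : 2 ≤ Lv n := by
  have h := (Nat.lt_clog_iff_pow_lt one_lt_two (x := 2 * n) (y := 1)).mpr (by omega)
  rw [Lv]; omega

lemma two_le_pow_Lv : 2 * n ≤ 2 ^ Lv n := Nat.le_pow_clog one_lt_two (2 * n)

lemma ff_eq (hn : 2 ≤ n) (t : UnitIco) :
    ff β n x t = ∑ ℓ ∈ Finset.range (2 * Lv n), cc β n x ℓ (kf ℓ t + 1) := by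
  have hL := Lv_ge_two n hn
  rw [ff]
  have h1 : ∀ ℓ ∉ Finset.range (2 * Lv n),
      ∑ k ∈ Finset.Icc 1 (2 ^ ℓ), cc β n x ℓ k * dyadicChi ℓ k t = 0 := by
    intro ℓ hℓ
    rw [Finset.mem_range, not_lt] at hℓ
    rw [inner_sum, cc, if_neg, if_neg]
    · rintro ⟨⟨-, h⟩, -⟩; omega
    · rintro ⟨h, -⟩; omega
  rw [tsum_eq_sum h1]
  exact Finset.sum_congr rfl fun ℓ _ => inner_sum β n x ℓ t

lemma kf_zero (t : UnitIco) : kf 0 t = 0 := by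
  rw [kf]
  simp only [pow_zero, mul_one]
  exact Nat.floor_eq_zero.mpr t.2.2

lemma ff_at_sample (hn : 2 ≤ n) (i : Fin n) : ff β n x (x i) = 0 := by
  have hL := Lv_ge_two n hn
  rw [ff_eq β n x hn]
  have hsplit : Finset.range (2 * Lv n) = Finset.Ico 0 (Lv n) ∪ Finset.Ico (Lv n) (2 * Lv n) := by
    rw [Finset.range_eq_Ico]
    exact (Finset.Ico_union_Ico_eq_Ico (Nat.zero_le _) (by omega)).symm
  rw [hsplit, Finset.sum_union (by
    apply Finset.Ico_disjoint_Ico_consecutive)]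
  have h1 : ∑ ℓ ∈ Finset.Ico 0 (Lv n), cc β n x ℓ (kf ℓ (x i) + 1) = ((vv β n : ℝ) : ℂ) := by
    rw [Finset.sum_eq_single 0]
    · rw [kf_zero, cc, if_pos ⟨rfl, rfl⟩]
    · intro ℓ hℓ hℓ0
      rw [Finset.mem_Ico] at hℓ
      rw [cc, if_neg (by tauto), if_neg (by rintro ⟨⟨h, -⟩, -⟩; omega)]
    · intro h; exfalso; apply h; rw [Finset.mem_Ico]; omega
  have h2 : ∑ ℓ ∈ Finset.Ico (Lv n) (2 * Lv n), cc β n x ℓ (kf ℓ (x i) + 1)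
      = -((vv β n : ℝ) : ℂ) := by
    have : ∀ ℓ ∈ Finset.Ico (Lv n) (2 * Lv n),
        cc β n x ℓ (kf ℓ (x i) + 1) = ((-(aa β n ℓ) : ℝ) : ℂ) := by
      intro ℓ hℓ
      rw [Finset.mem_Ico] at hℓ
      rw [cc, if_neg (by rintro ⟨h, -⟩; omega), if_pos ⟨⟨hℓ.1, hℓ.2⟩, ⟨i, rfl⟩⟩]
    rw [Finset.sum_congr rfl this, vv]
    push_cast
    rw [← Finset.sum_neg_distrib]
  rw [h1, h2, add_neg_cancel]

/-- t is "clean": its level-Lv interval contains no sample point -/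
def clean (t : UnitIco) : Prop := ∀ i, kf (Lv n) t ≠ kf (Lv n) (x i)

lemma ff_at_clean (hn : 2 ≤ n) (t : UnitIco) (ht : clean n x t) :
    ff β n x t = ((vv β n : ℝ) : ℂ) := by
  have hL := Lv_ge_two n hn
  rw [ff_eq β n x hn]
  rw [Finset.sum_eq_single 0]
  · rw [kf_zero, cc, if_pos ⟨rfl, rfl⟩]
  · intro ℓ hℓr hℓ0
    rw [cc, if_neg (by tauto), if_neg]
    rintro ⟨⟨hL1, hL2⟩, i, hi⟩
    have hkf : kf ℓ (x i) = kf ℓ t := by omega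
    exact ht i (by rw [kf_level_le hL1 t, kf_level_le hL1 (x i), hkf])
  · intro h; exfalso; apply h; rw [Finset.mem_range]; omega

lemma vv_le_one (hβ : 1 < β) (hn : 2 ≤ n) : vv β n ≤ 1 := by
  have hL := Lv_ge_two n hn
  have hcard : (Finset.Ico (Lv n) (2 * Lv n)).card = Lv n := by
    rw [Nat.card_Ico]; omega
  have hb : ∀ ℓ' ∈ Finset.Ico (Lv n) (2 * Lv n), aa β n ℓ' ≤ ((Lv n : ℝ) + 1)⁻¹ := by
    intro ℓ' hℓ'
    rw [Finset.mem_Ico] at hℓ'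
    have h1 : (1:ℝ) ≤ (ℓ' : ℝ) + 1 := by
      have := Nat.cast_nonneg (α := ℝ) ℓ'
      linarith
    have e1 : ((ℓ':ℝ)+1) ^ (-β) ≤ ((ℓ':ℝ)+1) ^ (-1 : ℝ) :=
      Real.rpow_le_rpow_of_exponent_le h1 (by linarith)
    have e3 : ((ℓ':ℝ)+1)⁻¹ ≤ ((Lv n : ℝ)+1)⁻¹ := by
      have : ((Lv n : ℝ)+1) ≤ ((ℓ':ℝ)+1) := by
        have : (Lv n : ℝ) ≤ (ℓ' : ℝ) := by exact_mod_cast hℓ'.1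
        linarith
      exact inv_anti₀ (by positivity) this
    have e4 : (n:ℝ) ^ (-(1/2) : ℝ) ≤ 1 :=
      Real.rpow_le_one_of_one_le_of_nonpos (by exact_mod_cast Nat.one_le_of_lt hn) (by norm_num)
    calc aa β n ℓ' ≤ ((ℓ':ℝ)+1) ^ (-β) * 1 := by
          rw [aa]
          exact mul_le_mul_of_nonneg_left e4 (by positivity)
      _ = ((ℓ':ℝ)+1) ^ (-β) := mul_one _
      _ ≤ ((ℓ':ℝ)+1) ^ (-1 : ℝ) := e1
      _ = ((ℓ':ℝ)+1)⁻¹ := Real.rpow_neg_one _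
      _ ≤ ((Lv n : ℝ)+1)⁻¹ := e3
  calc vv β n ≤ (Finset.Ico (Lv n) (2 * Lv n)).card • ((Lv n : ℝ) + 1)⁻¹ :=
        Finset.sum_le_card_nsmul _ _ _ hb
    _ = (Lv n : ℝ) * ((Lv n : ℝ) + 1)⁻¹ := by rw [hcard, nsmul_eq_mul]
    _ ≤ 1 := by
      rw [← div_eq_mul_inv, div_le_one (by positivity)]
      linarith

lemma card_polluted_le (ℓ : ℕ) :
    ((Finset.Icc 1 (2 ^ ℓ)).filter (fun k => ∃ i, kf ℓ (x i) + 1 = k)).card ≤ n := by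
  have hsub : (Finset.Icc 1 (2 ^ ℓ)).filter (fun k => ∃ i, kf ℓ (x i) + 1 = k)
      ⊆ Finset.image (fun i => kf ℓ (x i) + 1) Finset.univ := by
    intro k hk
    rw [Finset.mem_filter] at hk
    obtain ⟨-, i, hi⟩ := hk
    exact Finset.mem_image.mpr ⟨i, Finset.mem_univ i, hi⟩
  calc _ ≤ _ := Finset.card_le_card hsub
    _ ≤ (Finset.univ : Finset (Fin n)).card := Finset.card_image_le
    _ = n := by simp

lemma budget (hβ : 1 < β) (hn : 2 ≤ n) (ℓ : ℕ) :
    ∑ k ∈ Finset.Icc 1 (2 ^ ℓ), ‖cc β n x ℓ k‖ ^ 2 ≤ ((ℓ : ℝ) + 1) ^ (-(2 * β)) := by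
  have hL := Lv_ge_two n hn
  rcases Nat.eq_zero_or_pos ℓ with rfl | hℓ
  · have h0 : Finset.Icc 1 (2 ^ 0) = {1} := rfl
    rw [h0, Finset.sum_singleton, cc, if_pos ⟨rfl, rfl⟩]
    have h1 : ‖((vv β n : ℝ) : ℂ)‖ = vv β n := by
      rw [Complex.norm_real, Real.norm_eq_abs, abs_of_nonneg (vv_nonneg β n)]
    rw [h1]
    have hv1 := vv_le_one β n hβ hn
    have hv0 := vv_nonneg β n
    simp only [Nat.cast_zero, zero_add, Real.one_rpow]
    nlinarith
  · have hterm : ∀ k, ‖cc β n x ℓ k‖ ^ 2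
        = if (Lv n ≤ ℓ ∧ ℓ < 2 * Lv n) ∧ ∃ i, kf ℓ (x i) + 1 = k
          then (aa β n ℓ) ^ 2 else 0 := by
      intro k
      rw [cc, if_neg (by rintro ⟨h0, -⟩; omega)]
      split_ifs with h
      · rw [Complex.norm_real, Real.norm_eq_abs, abs_neg, abs_of_nonneg (aa_nonneg β n ℓ)]
      · simp
    by_cases hrange : Lv n ≤ ℓ ∧ ℓ < 2 * Lv n
    · have : ∑ k ∈ Finset.Icc 1 (2 ^ ℓ), ‖cc β n x ℓ k‖ ^ 2
          = ∑ k ∈ (Finset.Icc 1 (2 ^ ℓ)).filter (fun k => ∃ i, kf ℓ (x i) + 1 = k),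
              (aa β n ℓ) ^ 2 := by
        rw [Finset.sum_filter]
        refine Finset.sum_congr rfl fun k _ => ?_
        rw [hterm k]
        by_cases h : ∃ i, kf ℓ (x i) + 1 = k
        · rw [if_pos ⟨hrange, h⟩, if_pos h]
        · rw [if_neg (by tauto), if_neg h]
      rw [this, Finset.sum_const, nsmul_eq_mul]
      have hpos : (0:ℝ) < (ℓ:ℝ) + 1 := by positivity
      have hn0 : (0:ℝ) < (n:ℝ) := by positivity
      have haa2 : (aa β n ℓ) ^ 2 = ((ℓ:ℝ)+1) ^ (-(2*β)) * (n:ℝ)⁻¹ := by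
        have e1 : ((ℓ:ℝ)+1) ^ (-β) * ((ℓ:ℝ)+1) ^ (-β) = ((ℓ:ℝ)+1) ^ (-(2*β)) := by
          rw [← Real.rpow_add hpos]
          congr 1
          ring
        have e2 : (n:ℝ) ^ (-(1/2):ℝ) * (n:ℝ) ^ (-(1/2):ℝ) = (n:ℝ)⁻¹ := by
          rw [← Real.rpow_add hn0, show -(1/2) + -(1/2) = (-1:ℝ) by norm_num,
            Real.rpow_neg_one]
        rw [aa, mul_pow, pow_two, pow_two, e1, e2]
      calc (((Finset.Icc 1 (2 ^ ℓ)).filter (fun k => ∃ i, kf ℓ (x i) + 1 = k)).card : ℝ)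
            * (aa β n ℓ) ^ 2
          ≤ (n : ℝ) * (aa β n ℓ) ^ 2 := by
            apply mul_le_mul_of_nonneg_right _ (by positivity)
            exact_mod_cast card_polluted_le n x ℓ
        _ = ((ℓ:ℝ)+1) ^ (-(2*β)) * ((n:ℝ) * (n:ℝ)⁻¹) := by rw [haa2]; ring
        _ = ((ℓ:ℝ)+1) ^ (-(2*β)) := by rw [mul_inv_cancel₀ (ne_of_gt hn0), mul_one]
    · have : ∀ k ∈ Finset.Icc 1 (2 ^ ℓ), ‖cc β n x ℓ k‖ ^ 2 = 0 := by
        intro k _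
        rw [hterm k, if_neg (by tauto)]
      rw [Finset.sum_congr rfl this, Finset.sum_const, smul_zero]
      positivity

lemma ff_mem (hβ : 1 < β) (hn : 2 ≤ n) :
    ∃ c : ℕ → ℕ → ℂ,
      (∀ ℓ : ℕ, ∑ k ∈ Finset.Icc 1 (2 ^ ℓ), ‖c ℓ k‖ ^ 2 ≤ ((ℓ : ℝ) + 1) ^ (-(2 * β))) ∧
      ff β n x = fun t => ∑' ℓ : ℕ, ∑ k ∈ Finset.Icc 1 (2 ^ ℓ), c ℓ k * dyadicChi ℓ k t :=
  ⟨cc β n x, budget β n x hβ hn, rfl⟩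

lemma measurableSet_Ico01 : MeasurableSet (Set.Ico (0:ℝ) 1) := measurableSet_Ico

lemma μ01_apply (A : Set UnitIco) :
    μ01 A = volume (Subtype.val '' A) :=
  comap_subtype_coe_apply measurableSet_Ico01 volume A

/-- the fiber of kf ℓ over K, as a preimage of an interval -/
lemma kf_fiber (ℓ K : ℕ) :
    {t : UnitIco | kf ℓ t = K}
      = Subtype.val ⁻¹' Set.Ico ((K:ℝ)/2^ℓ) (((K:ℝ)+1)/2^ℓ) := by
  ext t
  have h0 : (0:ℝ) ≤ (t:ℝ) := t.2.1
  have hp : (0:ℝ) < 2 ^ ℓ := by positivity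
  simp only [Set.mem_setOf_eq, Set.mem_preimage, Set.mem_Ico, kf]
  rw [Nat.floor_eq_iff (by positivity), div_le_iff₀ hp, lt_div_iff₀ hp]

lemma fiber_measurable (ℓ K : ℕ) : MeasurableSet {t : UnitIco | kf ℓ t = K} := by
  rw [kf_fiber]
  exact measurable_subtype_coe measurableSet_Ico

lemma fiber_measure_le (ℓ K : ℕ) :
    μ01 {t : UnitIco | kf ℓ t = K} ≤ ENNReal.ofReal ((2:ℝ)⁻¹ ^ ℓ) := by
  rw [kf_fiber, μ01_apply]
  have h1 : Subtype.val '' (Subtype.val ⁻¹' Set.Ico ((K:ℝ)/2^ℓ) (((K:ℝ)+1)/2^ℓ)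
      : Set UnitIco) ⊆ Set.Ico ((K:ℝ)/2^ℓ) (((K:ℝ)+1)/2^ℓ) := Set.image_preimage_subset _ _
  calc volume _ ≤ volume (Set.Ico ((K:ℝ)/2^ℓ) (((K:ℝ)+1)/2^ℓ)) := measure_mono h1
    _ = ENNReal.ofReal (((K:ℝ)+1)/2^ℓ - (K:ℝ)/2^ℓ) := Real.volume_Ico
    _ = ENNReal.ofReal ((2:ℝ)⁻¹ ^ ℓ) := by
        congr 1
        rw [inv_pow]
        field_simp
        ring

/-- the clean set -/
def cleanSet : Set UnitIco := ⋂ i, {t : UnitIco | kf (Lv n) t = kf (Lv n) (x i)}ᶜ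

lemma cleanSet_measurable : MeasurableSet (cleanSet n x) :=
  MeasurableSet.iInter fun i => (fiber_measurable _ _).compl

lemma cleanSet_clean (t : UnitIco) (ht : t ∈ cleanSet n x) : clean n x t := by
  intro i
  have := Set.mem_iInter.mp ht i
  simpa using this

lemma univ_measure : μ01 (Set.univ : Set UnitIco) = 1 := by
  rw [μ01_apply, Set.image_univ, Subtype.range_coe, Real.volume_Ico]
  norm_num

lemma cleanSet_measure (hn : 2 ≤ n) : (2:ℝ≥0∞)⁻¹ ≤ μ01 (cleanSet n x) := by
  have hC := cleanSet_measurable n x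
  have hcompl : μ01 (cleanSet n x)ᶜ ≤ 2⁻¹ := by
    have h1 : (cleanSet n x)ᶜ = ⋃ i, {t : UnitIco | kf (Lv n) t = kf (Lv n) (x i)} := by
      rw [cleanSet, Set.compl_iInter]
      simp
    rw [h1]
    calc μ01 (⋃ i, {t : UnitIco | kf (Lv n) t = kf (Lv n) (x i)})
        ≤ ∑' i : Fin n, μ01 {t : UnitIco | kf (Lv n) t = kf (Lv n) (x i)} := measure_iUnion_le _
      _ ≤ ∑' _ : Fin n, ENNReal.ofReal ((2:ℝ)⁻¹ ^ Lv n) :=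
          ENNReal.tsum_le_tsum fun i => fiber_measure_le _ _
      _ = n * ENNReal.ofReal ((2:ℝ)⁻¹ ^ Lv n) := by
          rw [tsum_fintype]
          simp [Finset.sum_const, nsmul_eq_mul]
      _ = ENNReal.ofReal ((n:ℝ) * (2:ℝ)⁻¹ ^ Lv n) := by
          rw [ENNReal.ofReal_mul (by positivity)]
          simp
      _ ≤ 2⁻¹ := by
          rw [show ((2:ℝ≥0∞))⁻¹ = ENNReal.ofReal (2:ℝ)⁻¹ by
            rw [ENNReal.ofReal_inv_of_pos two_pos]; norm_num]
          apply ENNReal.ofReal_le_ofReal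
          have h2 : (2 * n : ℝ) ≤ 2 ^ Lv n := by exact_mod_cast two_le_pow_Lv n
          rw [inv_pow]
          rw [mul_inv_le_iff₀ (by positivity)]
          nlinarith [pow_pos (two_pos (α := ℝ)) (Lv n)]
  have htot := measure_add_measure_compl (μ := μ01) hC
  rw [univ_measure] at htot
  have h3 : (2:ℝ≥0∞)⁻¹ + 2⁻¹ ≤ μ01 (cleanSet n x) + 2⁻¹ := by
    rw [ENNReal.inv_two_add_inv_two]
    calc (1:ℝ≥0∞) = μ01 (cleanSet n x) + μ01 (cleanSet n x)ᶜ := htot.symm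
      _ ≤ μ01 (cleanSet n x) + 2⁻¹ := add_le_add_right hcompl _
  exact ENNReal.le_of_add_le_add_right (by norm_num) h3

lemma eLpNorm_lower (hβ : 1 < β) (hn : 2 ≤ n) :
    ENNReal.ofReal (vv β n / 2) ≤ eLpNorm (ff β n x) 2 μ01 := by
  set C := cleanSet n x with hCdef
  have hmono : ∀ t, ‖C.indicator (fun _ => ((vv β n : ℝ) : ℂ)) t‖ ≤ ‖ff β n x t‖ := by
    intro t
    by_cases ht : t ∈ C
    · rw [Set.indicator_of_mem ht, ff_at_clean β n x hn t (cleanSet_clean n x t ht)]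
    · rw [Set.indicator_of_notMem ht]
      simp
  refine le_trans ?_ (eLpNorm_mono hmono)
  rw [eLpNorm_indicator_const (cleanSet_measurable n x) two_ne_zero ENNReal.ofNat_ne_top]
  have h1 : ‖((vv β n : ℝ) : ℂ)‖ₑ = ENNReal.ofReal (vv β n) := by
    rw [← ofReal_norm_eq_enorm, Complex.norm_real, Real.norm_eq_abs, abs_of_nonneg (vv_nonneg β n)]
  have htoReal : (2 : ℝ≥0∞).toReal = 2 := by norm_num
  rw [h1, htoReal]
  have h2 : (2:ℝ≥0∞)⁻¹ ≤ μ01 C ^ (1/2 : ℝ) := by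
    calc (2:ℝ≥0∞)⁻¹ = (2⁻¹ : ℝ≥0∞) ^ (1:ℝ) := by rw [ENNReal.rpow_one]
      _ ≤ (2⁻¹ : ℝ≥0∞) ^ (1/2 : ℝ) :=
          ENNReal.rpow_le_rpow_of_exponent_ge (by norm_num) (by norm_num)
      _ ≤ μ01 C ^ (1/2 : ℝ) := ENNReal.rpow_le_rpow (cleanSet_measure n x hn) (by norm_num)
  calc ENNReal.ofReal (vv β n / 2)
      = ENNReal.ofReal (vv β n) * 2⁻¹ := by
        rw [div_eq_mul_inv, ENNReal.ofReal_mul (vv_nonneg β n),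
          ENNReal.ofReal_inv_of_pos two_pos]
        norm_num
    _ ≤ ENNReal.ofReal (vv β n) * μ01 C ^ (1/2 : ℝ) := mul_le_mul_right h2 _

lemma Lv_le_log (hn : 2 ≤ n) : (Lv n : ℝ) ≤ 5 * Real.log n := by
  have hL2 := Lv_ge_two n hn
  have hlog2 : (0.6931471803 : ℝ) < Real.log 2 := Real.log_two_gt_d9
  have hlogn : Real.log 2 ≤ Real.log n :=
    Real.log_le_log (by norm_num) (by exact_mod_cast hn)
  have hpow : (2:ℕ) ^ (Lv n - 1) < 2 * n := by
    have h := Nat.pow_pred_clog_lt_self (b := 2) one_lt_two (x := 2*n) (by omega)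
    simpa [Lv, Nat.pred_eq_sub_one] using h
  have hpowR : (2:ℝ) ^ (Lv n - 1 : ℕ) < 2 * n := by exact_mod_cast hpow
  have h1 : Real.log ((2:ℝ) ^ (Lv n - 1 : ℕ)) < Real.log (2 * n) :=
    Real.log_lt_log (by positivity) hpowR
  rw [Real.log_pow] at h1
  have hcast : ((Lv n - 1 : ℕ) : ℝ) = (Lv n : ℝ) - 1 := by
    have h2 : 1 ≤ Lv n := by omega
    push_cast [Nat.cast_sub h2]
    ring
  rw [hcast] at h1
  have h3 : Real.log (2 * (n:ℝ)) = Real.log 2 + Real.log n := by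
    rw [Real.log_mul two_ne_zero (by positivity)]
  rw [show ((2:ℝ) * (n:ℕ)) = ((2 * n : ℝ)) by push_cast; ring] at h1
  rw [h3] at h1
  have h4 : ((Lv n : ℝ) - 1) * 0.6931471803 ≤ ((Lv n : ℝ) - 1) * Real.log 2 := by
    have : (0:ℝ) ≤ (Lv n : ℝ) - 1 := by
      have : (2:ℝ) ≤ (Lv n : ℝ) := by exact_mod_cast hL2
      linarith
    nlinarith
  linarith

lemma log_pos' (hn : 2 ≤ n) : 0 < Real.log n :=
  Real.log_pos (by exact_mod_cast hn)

lemma vv_lower (hβ : 1 < β) (hn : 2 ≤ n) :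
    2 ^ (-β) * 5 ^ (-β + 1) / 2 * (n : ℝ) ^ (-(1 / 2) : ℝ) * Real.log n ^ (-β + 1)
      ≤ vv β n / 2 := by
  have hL2 := Lv_ge_two n hn
  have hLpos : (0:ℝ) < (Lv n : ℝ) := by exact_mod_cast by omega
  have hlogpos := log_pos' n hn
  have hnp : (0:ℝ) < (n : ℝ) ^ (-(1 / 2) : ℝ) := by positivity
  -- step 1 : vv ≥ L * (2L)^(-β) * n^(-1/2)
  have hterm : ∀ ℓ ∈ Finset.Ico (Lv n) (2 * Lv n),
      (2 * (Lv n : ℝ)) ^ (-β) * (n : ℝ) ^ (-(1 / 2) : ℝ) ≤ aa β n ℓ := by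
    intro ℓ hℓ
    rw [Finset.mem_Ico] at hℓ
    rw [aa]
    apply mul_le_mul_of_nonneg_right _ (le_of_lt hnp)
    apply Real.rpow_le_rpow_of_nonpos (by positivity) _ (by linarith)
    have : (ℓ : ℝ) ≤ 2 * (Lv n : ℝ) - 1 := by
      have : (ℓ:ℝ) ≤ (2 * Lv n : ℕ) - 1 := by
        have := hℓ.2
        have h5 : ℓ ≤ 2 * Lv n - 1 := by omega
        calc (ℓ:ℝ) ≤ ((2 * Lv n - 1 : ℕ) : ℝ) := by exact_mod_cast h5
          _ = (2 * Lv n : ℕ) - 1 := by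
            rw [Nat.cast_sub (by omega)]
            norm_num
      push_cast at this ⊢
      linarith
    linarith
  have hvv : (Lv n : ℝ) * ((2 * (Lv n : ℝ)) ^ (-β) * (n : ℝ) ^ (-(1 / 2) : ℝ)) ≤ vv β n := by
    have h6 := Finset.card_nsmul_le_sum (Finset.Ico (Lv n) (2 * Lv n)) _ _ hterm
    rw [Nat.card_Ico, nsmul_eq_mul] at h6
    calc (Lv n : ℝ) * ((2 * (Lv n : ℝ)) ^ (-β) * (n : ℝ) ^ (-(1 / 2) : ℝ))
        = ((2 * Lv n - Lv n : ℕ) : ℝ) * ((2 * (Lv n : ℝ)) ^ (-β) * (n : ℝ) ^ (-(1 / 2) : ℝ)) := by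
          congr 2
          omega
      _ ≤ vv β n := h6
  -- step 2 : L * (2L)^(-β) ≥ 2^(-β) * 5^(-β+1) * logn^(-β+1)
  have hkey : 2 ^ (-β) * 5 ^ (-β + 1) * Real.log n ^ (-β + 1)
      ≤ (Lv n : ℝ) * (2 * (Lv n : ℝ)) ^ (-β) := by
    have e1 : (2 * (Lv n : ℝ)) ^ (-β) = 2 ^ (-β) * (Lv n : ℝ) ^ (-β) :=
      Real.mul_rpow (by norm_num) (le_of_lt hLpos)
    have e2 : (Lv n : ℝ) * (Lv n : ℝ) ^ (-β) = (Lv n : ℝ) ^ (-β + 1) := by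
      rw [Real.rpow_add hLpos, Real.rpow_one]
      ring
    have e3 : 5 ^ (-β + 1) * Real.log n ^ (-β + 1) = (5 * Real.log n) ^ (-β + 1) :=
      (Real.mul_rpow (by norm_num) (le_of_lt hlogpos)).symm
    have e4 : (5 * Real.log n) ^ (-β + 1) ≤ (Lv n : ℝ) ^ (-β + 1) :=
      Real.rpow_le_rpow_of_nonpos hLpos (Lv_le_log n hn) (by linarith)
    calc 2 ^ (-β) * 5 ^ (-β + 1) * Real.log n ^ (-β + 1)
        = 2 ^ (-β) * (5 * Real.log n) ^ (-β + 1) := by rw [mul_assoc, e3]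
      _ ≤ 2 ^ (-β) * (Lv n : ℝ) ^ (-β + 1) := by
          apply mul_le_mul_of_nonneg_left e4 (le_of_lt (Real.rpow_pos_of_pos two_pos _))
      _ = (Lv n : ℝ) * (2 * (Lv n : ℝ)) ^ (-β) := by rw [e1, ← e2]; ring
  calc 2 ^ (-β) * 5 ^ (-β + 1) / 2 * (n : ℝ) ^ (-(1 / 2) : ℝ) * Real.log n ^ (-β + 1)
      = (2 ^ (-β) * 5 ^ (-β + 1) * Real.log n ^ (-β + 1)) * (n : ℝ) ^ (-(1 / 2) : ℝ) / 2 := by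
        ring
    _ ≤ ((Lv n : ℝ) * (2 * (Lv n : ℝ)) ^ (-β)) * (n : ℝ) ^ (-(1 / 2) : ℝ) / 2 := by
        have := mul_le_mul_of_nonneg_right hkey (le_of_lt hnp)
        linarith
    _ ≤ vv β n / 2 := by
        have h7 : (Lv n : ℝ) * (2 * (Lv n : ℝ)) ^ (-β) * (n : ℝ) ^ (-(1 / 2) : ℝ) ≤ vv β n := by
          rw [mul_assoc]
          exact hvv
        linarith

end St15

theorem statement15 (β : ℝ) (hβ : 1 < β) :
    ∃ c : ℝ, 0 < c ∧
      ∀ n : ℕ, 2 ≤ n →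
        ENNReal.ofReal (c * (n : ℝ) ^ (-(1 / 2) : ℝ) * Real.log n ^ (-β + 1)) ≤
          sampNum μ01 (Fβ β) n := by
  refine ⟨2 ^ (-β) * 5 ^ (-β + 1) / 2, by positivity, ?_⟩
  intro n hn
  rw [sampNum]
  refine le_iInf fun x => le_iInf fun φ => le_iInf fun _ => ?_
  have hmem : St15.ff β n x ∈ Fβ β := St15.ff_mem β n x hβ hn
  have hzero : (fun t => St15.ff β n x t - ∑ i, St15.ff β n x (x i) * φ i t)
      = St15.ff β n x := by
    funext t
    simp [St15.ff_at_sample β n x hn]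
  have step1 : ENNReal.ofReal (2 ^ (-β) * 5 ^ (-β + 1) / 2 * (n : ℝ) ^ (-(1 / 2) : ℝ)
          * Real.log n ^ (-β + 1)) ≤ ENNReal.ofReal (St15.vv β n / 2) :=
    ENNReal.ofReal_le_ofReal (St15.vv_lower β n hβ hn)
  have step2 := St15.eLpNorm_lower β n x hβ hn
  have step3 : eLpNorm (St15.ff β n x) 2 μ01
      = eLpNorm (fun t => St15.ff β n x t - ∑ i, St15.ff β n x (x i) * φ i t) 2 μ01 := by
    rw [hzero]
  have step4 : eLpNorm (fun t => St15.ff β n x t - ∑ i, St15.ff β n x (x i) * φ i t) 2 μ01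
      ≤ ⨆ f ∈ Fβ β, eLpNorm (fun t => f t - ∑ i, f (x i) * φ i t) 2 μ01 :=
    le_iSup₂ (f := fun f (_ : f ∈ Fβ β) => eLpNorm (fun t => f t - ∑ i, f (x i) * φ i t) 2 μ01)
      (St15.ff β n x) hmem
  exact le_trans (le_trans (le_trans step1 step2) (le_of_eq step3)) step4

end
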